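/- Stochastic Bit-Lifting Channels (Proposition 'lifting_channels'): Let B, B↑ ∈ ℕ₊, let W ∈ ℝ^{B↑×2B}, and let 𝐗^{↑:W} be the stochastic bit-lifting channel whose i-th coordinate at input x ∈ {0,1}^B has law Σ_{j=1}^B SM_{2B}(W_{i:})_j δ_{x_j} + Σ_{j=1}^B SM_{2B}(W_{i:})_{j+B} δ_{¬x_j}. Then (1) 𝐗^{↑:W}(x) ∈ {0,1}^{B↑} ℙ-almost surely for every x ∈ {0,1}^B; and (2) if W is a binary matrix with exactly one nonzero entry per row then for every 0 < δ ≤ 1 there exists η > 0 such that, with probability at least 1 − δ, simultaneously for every i ∈ [B]₊: the number of indices j ∈ [B↑]₊ with 𝐗^{↑:ηW}_j = x_i equals ‖W_{:i}‖₀ and the number of indices j ∈ [B↑]₊ with 𝐗^{↑:ηW}_j = ¬x_i equals ‖W_{:i+B}‖₀. -/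

import Mathlib

/-!
Statement 3: Stochastic Bit-Lifting Channels (Proposition `lifting_channels`).
-/

open MeasureTheory ProbabilityTheory
open scoped ENNReal

/-- Softmax on `ℝ^n`. -/
noncomputable def softmax {n : ℕ} (w : Fin n → ℝ) : Fin n → ℝ :=
  fun i => Real.exp (w i) / ∑ j, Real.exp (w j)

/-- The (real) value of the `j`-th literal at input `x ∈ {0,1}^B`: `x_j` for
`j < B` and `¬x_{j-B} = 1 − x_{j-B}` for `j ≥ B`. -/
def litVal {B : ℕ} (x : Fin B → Bool) (j : Fin (2 * B)) : ℝ :=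
  if h : j.val < B then (cond (x ⟨j.val, h⟩) 1 0 : ℝ)
  else 1 - (cond (x ⟨j.val - B, by have := j.isLt; omega⟩) 1 0 : ℝ)

/-- The law `Σ_{j=1}^B SM_{2B}(W_i)_j δ_{x_j} + Σ_{j=1}^B SM_{2B}(W_i)_{j+B} δ_{¬x_j}`
of the `i`-th coordinate of the stochastic bit-lifting channel with weights `W`
at input `x`. -/
noncomputable def liftCoordLaw {B Bup : ℕ} (W : Fin Bup → Fin (2 * B) → ℝ)
    (x : Fin B → Bool) (i : Fin Bup) : Measure ℝ :=
  ∑ j : Fin (2 * B), ENNReal.ofReal (softmax (W i) j) • Measure.dirac (litVal x j)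

lemma expsum_pos {n : ℕ} (hn : 0 < n) (w : Fin n → ℝ) : 0 < ∑ j, Real.exp (w j) :=
  Finset.sum_pos (fun _ _ => Real.exp_pos _)
    (Finset.univ_nonempty_iff.mpr (Fin.pos_iff_nonempty.mp hn))

lemma softmax_nonneg {n : ℕ} (w : Fin n → ℝ) (j : Fin n) : 0 ≤ softmax w j :=
  div_nonneg (Real.exp_pos _).le (Finset.sum_nonneg fun _ _ => (Real.exp_pos _).le)

lemma softmax_sum {n : ℕ} (hn : 0 < n) (w : Fin n → ℝ) : ∑ j, softmax w j = 1 := by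
  unfold softmax
  rw [← Finset.sum_div, div_self (expsum_pos hn w).ne']

lemma litVal_mem {B : ℕ} (x : Fin B → Bool) (j : Fin (2 * B)) :
    litVal x j = 0 ∨ litVal x j = 1 := by
  unfold litVal
  split <;> rename_i h
  · cases x ⟨j.val, h⟩ <;> simp
  · cases x ⟨j.val - B, by have := j.isLt; omega⟩ <;> simp

lemma liftCoordLaw_apply {B Bup : ℕ} (W : Fin Bup → Fin (2 * B) → ℝ)
    (x : Fin B → Bool) (i : Fin Bup) (s : Set ℝ) (hs : MeasurableSet s) :
    liftCoordLaw W x i s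
      = ∑ j : Fin (2 * B), ENNReal.ofReal (softmax (W i) j) * s.indicator 1 (litVal x j) := by
  unfold liftCoordLaw
  rw [Measure.finset_sum_apply]
  congr 1
  ext j
  rw [Measure.smul_apply, Measure.dirac_apply' _ hs, smul_eq_mul]

lemma liftCoordLaw_univ {B Bup : ℕ} (hB : 0 < B) (W : Fin Bup → Fin (2 * B) → ℝ)
    (x : Fin B → Bool) (i : Fin Bup) : liftCoordLaw W x i Set.univ = 1 := by
  rw [liftCoordLaw_apply _ _ _ _ MeasurableSet.univ]
  simp only [Set.indicator_univ, Pi.one_apply, mul_one]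
  rw [← ENNReal.ofReal_sum_of_nonneg (fun j _ => softmax_nonneg _ j),
    softmax_sum (by omega), ENNReal.ofReal_one]

lemma lit_first {B : ℕ} (hB : 0 < B) (i : Fin B) (k : Fin (2 * B)) :
    (∀ x : Fin B → Bool, litVal x k = (cond (x i) 1 0 : ℝ)) ↔ k.val = i.val := by
  constructor
  · intro h
    by_cases hk : k.val < B
    · by_contra hne
      have := h (fun m => decide (m.val = k.val))
      rw [litVal, dif_pos hk] at this
      rw [decide_eq_false (fun e : (i:ℕ) = (k:ℕ) => hne e.symm)] at this
      norm_num at this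
    · have := h (fun _ => false)
      rw [litVal, dif_neg hk] at this
      norm_num at this
  · intro h x
    rw [litVal, dif_pos (h ▸ i.isLt)]
    congr 1
    exact congrArg x (Fin.ext h)

lemma lit_second {B : ℕ} (hB : 0 < B) (i : Fin B) (k : Fin (2 * B)) :
    (∀ x : Fin B → Bool, litVal x k = 1 - (cond (x i) 1 0 : ℝ)) ↔ k.val = i.val + B := by
  constructor
  · intro h
    by_cases hk : k.val < B
    · have := h (fun _ => false)
      rw [litVal, dif_pos hk] at this
      norm_num at this
    · by_contra hne
      have hne' : k.val - B ≠ i.val := by have := k.isLt; omega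
      have := h (fun m => decide (m.val = i.val))
      rw [litVal, dif_neg hk] at this
      rw [decide_eq_false hne'] at this
      norm_num at this
  · intro h x
    have hk : ¬ k.val < B := by omega
    rw [litVal, dif_neg hk]
    congr 2
    exact congrArg x (Fin.ext (show k.val - B = i.val by omega))

/-- **Stochastic Bit-Lifting Channels.** -/
theorem lifting_channels
    {Ω : Type*} [MeasureSpace Ω] [IsProbabilityMeasure (ℙ : Measure Ω)]
    (B Bup : ℕ) (hB : 0 < B) (hBup : 0 < Bup)
    (W : Fin Bup → Fin (2 * B) → ℝ)
    (X : ℝ → Ω → (Fin B → Bool) → Fin Bup → ℝ)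
    (hlaw : ∀ (η : ℝ) (x : Fin B → Bool) (i : Fin Bup),
      Measure.map (fun ω => X η ω x i) ℙ = liftCoordLaw (η • W) x i) :
    (∀ (η : ℝ) (x : Fin B → Bool),
      ∀ᵐ ω ∂ℙ, ∀ i : Fin Bup, X η ω x i = 0 ∨ X η ω x i = 1) ∧
    ((∀ i j, W i j = 0 ∨ W i j = 1) → (∀ i, ∃! j, W i j ≠ 0) →
      ∀ δ : ℝ, 0 < δ → δ ≤ 1 → ∃ η : ℝ, 0 < η ∧
        ENNReal.ofReal (1 - δ) ≤
          ℙ {ω | ∀ i : Fin B,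
            (Finset.univ.filter fun j : Fin Bup =>
              ∀ x : Fin B → Bool, X η ω x j = (cond (x i) 1 0 : ℝ)).card
              = (Finset.univ.filter fun j : Fin Bup =>
                  W j ⟨i.val, by have := i.isLt; omega⟩ ≠ 0).card ∧
            (Finset.univ.filter fun j : Fin Bup =>
              ∀ x : Fin B → Bool, X η ω x j = 1 - (cond (x i) 1 0 : ℝ)).card
              = (Finset.univ.filter fun j : Fin Bup =>
                  W j ⟨i.val + B, by have := i.isLt; omega⟩ ≠ 0).card}) := by
  have haem : ∀ (η : ℝ) (x : Fin B → Bool) (i : Fin Bup),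
      AEMeasurable (fun ω => X η ω x i) ℙ := by
    intro η x i
    by_contra h
    have h0 := Measure.map_of_not_aemeasurable (μ := ℙ) h
    have h1 : Measure.map (fun ω => X η ω x i) ℙ Set.univ = 1 := by
      rw [hlaw]; exact liftCoordLaw_univ hB _ x i
    rw [h0] at h1
    simp at h1
  constructor
  · intro η x
    rw [ae_all_iff]
    intro i
    rw [ae_iff]
    have hset : MeasurableSet {t : ℝ | ¬(t = 0 ∨ t = 1)} := by
      have : {t : ℝ | ¬(t = 0 ∨ t = 1)} = (({0} : Set ℝ) ∪ {1})ᶜ := by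
        ext t; simp [not_or, and_comm]
      rw [this]
      exact ((measurableSet_singleton 0).union (measurableSet_singleton 1)).compl
    have key : ℙ ((fun ω => X η ω x i) ⁻¹' {t : ℝ | ¬(t = 0 ∨ t = 1)}) = 0 := by
      rw [← Measure.map_apply_of_aemeasurable (haem η x i) hset, hlaw,
        liftCoordLaw_apply _ _ _ _ hset]
      refine Finset.sum_eq_zero fun j _ => ?_
      rw [Set.indicator_of_notMem, mul_zero]
      simp only [Set.mem_setOf_eq, not_not]
      exact litVal_mem x j
    exact key
  · intro hbin huniq δ hδ hδ1
    -- the unique nonzero column of each row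
    set σ : Fin Bup → Fin (2 * B) := fun j => (huniq j).choose with hσdef
    have hσ : ∀ j, W j (σ j) ≠ 0 := fun j => (huniq j).choose_spec.1
    have hσu : ∀ j k, W j k ≠ 0 → k = σ j := fun j k hk => (huniq j).choose_spec.2 k hk
    have hσ1 : ∀ j, W j (σ j) = 1 := fun j => (hbin j (σ j)).resolve_left (hσ j)
    -- constants and temperature
    set C : ℝ := (Bup : ℝ) * 2 ^ B * (2 * B) with hCdef
    have hBup1 : (1 : ℝ) ≤ Bup := by exact_mod_cast hBup
    have hB1 : (1 : ℝ) ≤ B := by exact_mod_cast hB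
    have h2B : (2 : ℝ) ≤ 2 ^ B := by
      calc (2 : ℝ) = 2 ^ 1 := (pow_one 2).symm
        _ ≤ 2 ^ B := pow_le_pow_right₀ one_le_two hB
    have h2B' : (2 : ℝ) ≤ 2 * B := by linarith
    have hC4 : (4 : ℝ) ≤ C := by
      rw [hCdef]
      calc (4 : ℝ) = 1 * 2 * 2 := by norm_num
        _ ≤ (Bup : ℝ) * 2 ^ B * (2 * B) := by
            apply mul_le_mul _ h2B' (by norm_num) (by positivity)
            exact mul_le_mul hBup1 h2B (by norm_num) (by linarith)
    have hCpos : (0 : ℝ) < C := by linarith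
    have hCδ : 1 < C / δ := (one_lt_div hδ).mpr (by linarith)
    set η : ℝ := Real.log (C / δ) with hηdef
    have hηpos : 0 < η := Real.log_pos hCδ
    have hexp : Real.exp η = C / δ := Real.exp_log (by positivity)
    refine ⟨η, hηpos, ?_⟩
    -- the good event
    set G : Set Ω :=
      {ω | ∀ (j : Fin Bup) (x : Fin B → Bool), X η ω x j = litVal x (σ j)} with hGdef
    -- on G, the counting identities hold
    have hsub : G ⊆ {ω | ∀ i : Fin B,
        (Finset.univ.filter fun j : Fin Bup =>
          ∀ x : Fin B → Bool, X η ω x j = (cond (x i) 1 0 : ℝ)).card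
          = (Finset.univ.filter fun j : Fin Bup =>
              W j ⟨i.val, by have := i.isLt; omega⟩ ≠ 0).card ∧
        (Finset.univ.filter fun j : Fin Bup =>
          ∀ x : Fin B → Bool, X η ω x j = 1 - (cond (x i) 1 0 : ℝ)).card
          = (Finset.univ.filter fun j : Fin Bup =>
              W j ⟨i.val + B, by have := i.isLt; omega⟩ ≠ 0).card} := by
      intro ω hω
      intro i
      constructor
      · refine congrArg Finset.card ?_
        ext j
        simp only [Finset.mem_filter, Finset.mem_univ, true_and]
        constructor
        · intro hj
          have hall : ∀ x : Fin B → Bool, litVal x (σ j) = (cond (x i) 1 0 : ℝ) :=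
            fun x => (hω j x).symm.trans (hj x)
          have hval := (lit_first hB i (σ j)).mp hall
          have heq : (⟨i.val, by have := i.isLt; omega⟩ : Fin (2 * B)) = σ j :=
            Fin.ext hval.symm
          rw [heq]; exact hσ j
        · intro hj x
          have heq := hσu j _ hj
          rw [hω j x]
          exact (lit_first hB i (σ j)).mpr (by rw [← heq]) x
      · refine congrArg Finset.card ?_
        ext j
        simp only [Finset.mem_filter, Finset.mem_univ, true_and]
        constructor
        · intro hj
          have hall : ∀ x : Fin B → Bool, litVal x (σ j) = 1 - (cond (x i) 1 0 : ℝ) :=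
            fun x => (hω j x).symm.trans (hj x)
          have hval := (lit_second hB i (σ j)).mp hall
          have heq : (⟨i.val + B, by have := i.isLt; omega⟩ : Fin (2 * B)) = σ j :=
            Fin.ext hval.symm
          rw [heq]; exact hσ j
        · intro hj x
          have heq := hσu j _ hj
          rw [hω j x]
          exact (lit_second hB i (σ j)).mpr (by rw [← heq]) x
    -- single bad-coordinate probability bound
    have hbad : ∀ (j : Fin Bup) (x : Fin B → Bool),
        ℙ {ω | X η ω x j ≠ litVal x (σ j)}
          ≤ ENNReal.ofReal (((2 * B : ℕ) : ℝ) * Real.exp (-η)) := by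
      intro j x
      have hs : MeasurableSet ({litVal x (σ j)}ᶜ : Set ℝ) :=
        (measurableSet_singleton _).compl
      have hmap : ℙ {ω | X η ω x j ≠ litVal x (σ j)}
          = liftCoordLaw (η • W) x j {litVal x (σ j)}ᶜ := by
        rw [← hlaw, Measure.map_apply_of_aemeasurable (haem η x j) hs]
        rfl
      rw [hmap, liftCoordLaw_apply _ _ _ _ hs]
      have hterm : ∀ k : Fin (2 * B),
          ENNReal.ofReal (softmax ((η • W) j) k)
            * ({litVal x (σ j)}ᶜ : Set ℝ).indicator 1 (litVal x k)
          ≤ if k = σ j then 0 else ENNReal.ofReal (Real.exp (-η)) := by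
        intro k
        by_cases hk : k = σ j
        · subst hk
          rw [if_pos rfl, Set.indicator_of_notMem (by simp), mul_zero]
        · rw [if_neg hk]
          have hW0 : W j k = 0 := by
            by_contra h; exact hk (hσu j k h)
          have hsm : softmax ((η • W) j) k ≤ Real.exp (-η) := by
            unfold softmax
            have hden : Real.exp η ≤ ∑ m, Real.exp ((η • W) j m) := by
              have := Finset.single_le_sum (f := fun m => Real.exp ((η • W) j m))
                (fun m _ => (Real.exp_pos _).le) (Finset.mem_univ (σ j))
              simpa [Pi.smul_apply, smul_eq_mul, hσ1 j] using this
            rw [div_le_iff₀ (expsum_pos (by omega) _)]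
            have h1 : Real.exp ((η • W) j k) = 1 := by
              simp [Pi.smul_apply, smul_eq_mul, hW0]
            rw [h1]
            calc (1 : ℝ) = Real.exp (-η) * Real.exp η := by
                  rw [← Real.exp_add]; simp
              _ ≤ Real.exp (-η) * ∑ m, Real.exp ((η • W) j m) :=
                  mul_le_mul_of_nonneg_left hden (Real.exp_pos _).le
          calc ENNReal.ofReal (softmax ((η • W) j) k)
                * ({litVal x (σ j)}ᶜ : Set ℝ).indicator 1 (litVal x k)
              ≤ ENNReal.ofReal (softmax ((η • W) j) k) * 1 := by
                gcongr
                unfold Set.indicator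
                split <;> simp
            _ = ENNReal.ofReal (softmax ((η • W) j) k) := mul_one _
            _ ≤ ENNReal.ofReal (Real.exp (-η)) := ENNReal.ofReal_le_ofReal hsm
      calc ∑ k : Fin (2 * B), ENNReal.ofReal (softmax ((η • W) j) k)
            * ({litVal x (σ j)}ᶜ : Set ℝ).indicator 1 (litVal x k)
          ≤ ∑ k : Fin (2 * B),
              (if k = σ j then 0 else ENNReal.ofReal (Real.exp (-η))) :=
            Finset.sum_le_sum fun k _ => hterm k
        _ ≤ ∑ _k : Fin (2 * B), ENNReal.ofReal (Real.exp (-η)) :=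
            Finset.sum_le_sum fun k _ => by split <;> simp
        _ = ((2 * B : ℕ) : ℝ≥0∞) * ENNReal.ofReal (Real.exp (-η)) := by
            simp [Finset.sum_const, nsmul_eq_mul]
        _ = ENNReal.ofReal (((2 * B : ℕ) : ℝ) * Real.exp (-η)) := by
            rw [ENNReal.ofReal_mul (by positivity), ENNReal.ofReal_natCast]
    -- union bound
    have hGc : ℙ Gᶜ ≤ ENNReal.ofReal δ := by
      have hGc_sub : Gᶜ ⊆ ⋃ j : Fin Bup, ⋃ x : Fin B → Bool,
          {ω | X η ω x j ≠ litVal x (σ j)} := by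
        intro ω hω
        simp only [hGdef, Set.mem_compl_iff, Set.mem_setOf_eq, not_forall] at hω
        obtain ⟨j, x, hjx⟩ := hω
        exact Set.mem_iUnion.mpr ⟨j, Set.mem_iUnion.mpr ⟨x, hjx⟩⟩
      have hval : ((Bup * 2 ^ B : ℕ) : ℝ) * (((2 * B : ℕ) : ℝ) * Real.exp (-η)) = δ := by
        rw [Real.exp_neg, hexp, inv_div, hCdef]
        push_cast
        field_simp
      calc ℙ Gᶜ
          ≤ ∑ j : Fin Bup, ∑ x : Fin B → Bool, ℙ {ω | X η ω x j ≠ litVal x (σ j)} := by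
            refine (measure_mono hGc_sub).trans ?_
            refine (measure_iUnion_fintype_le _ _).trans ?_
            exact Finset.sum_le_sum fun j _ => measure_iUnion_fintype_le _ _
        _ ≤ ∑ _j : Fin Bup, ∑ _x : Fin B → Bool,
              ENNReal.ofReal (((2 * B : ℕ) : ℝ) * Real.exp (-η)) :=
            Finset.sum_le_sum fun j _ => Finset.sum_le_sum fun x _ => hbad j x
        _ = ((Bup * 2 ^ B : ℕ) : ℝ≥0∞)
              * ENNReal.ofReal (((2 * B : ℕ) : ℝ) * Real.exp (-η)) := by
            simp [Finset.sum_const, nsmul_eq_mul, Fintype.card_fun]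
            ring
        _ = ENNReal.ofReal δ := by
            rw [← ENNReal.ofReal_natCast, ← ENNReal.ofReal_mul (by positivity), hval]
    have hG : ENNReal.ofReal (1 - δ) ≤ ℙ G := by
      have h1 : (1 : ℝ≥0∞) ≤ ℙ G + ENNReal.ofReal δ := by
        calc (1 : ℝ≥0∞) = ℙ (Set.univ : Set Ω) := measure_univ.symm
          _ = ℙ (G ∪ Gᶜ) := by rw [Set.union_compl_self]
          _ ≤ ℙ G + ℙ Gᶜ := measure_union_le _ _
          _ ≤ ℙ G + ENNReal.ofReal δ := add_le_add_right hGc _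
      calc ENNReal.ofReal (1 - δ) = 1 - ENNReal.ofReal δ := by
            rw [ENNReal.ofReal_sub _ hδ.le, ENNReal.ofReal_one]
        _ ≤ ℙ G := tsub_le_iff_right.mpr h1
    exact hG.trans (measure_mono hsub)
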